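/- Fix linear maps A, Ā : ℝ^{d_x} →ₗ ℝ^{d_x}, B, B̄ : ℝ^{d_u} →ₗ ℝ^{d_x}, gain matrices θ_t, θ̄_t : ℝ^{d_x} →ₗ ℝ^{d_u}, noises w^i_t ∈ ℝ^{d_x}, normalized weights α with ∑ α_i = 1, and a deterministic sequence z_t ∈ ℝ^{d_x}. Define two trajectories with the same initial conditions x^i_1 = x̂^i_1: (i) x^i_{t+1} = A x^i_t + B u^i_t + Ā x̄_t + B̄ ū_t + w^i_t with u^i_t = θ_t x^i_t + (θ̄_t - θ_t) x̄_t; (ii) x̂^i_{t+1} = A x̂^i_t + B û^i_t + Ā x̂̄_t + B̄ û̄_t + w^i_t with û^i_t = θ_t x̂^i_t + (θ̄_t - θ_t) z_t, where x̄_t, x̂̄_t (resp. ū_t, û̄_t) are the weighted averages. Then for all t and all i, x^i_t - x̄_t = x̂^i_t - x̂̄_t and u^i_t - ū_t = û^i_t - û̄_t. -/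
import Mathlib


open Matrix

/-- Lemma 3: the deviations from the weighted averages are identical along the
deep-state-sharing trajectory (which feeds back the true deep state) and the no-sharing
trajectory (which feeds back a deterministic prediction `z`). -/
theorem deviations_equal_along_trajectories (n dx du : ℕ) (hn : 1 ≤ n)
    (α : Fin n → ℝ) (hα : ∑ i, α i = 1)
    (A Abar : Matrix (Fin dx) (Fin dx) ℝ) (B Bbar : Matrix (Fin dx) (Fin du) ℝ)
    (θ θbar : ℕ → Matrix (Fin du) (Fin dx) ℝ)
    (w : ℕ → Fin n → (Fin dx → ℝ)) (z : ℕ → (Fin dx → ℝ))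
    (x xh : ℕ → Fin n → (Fin dx → ℝ)) (u uh : ℕ → Fin n → (Fin du → ℝ))
    (hinit : x 0 = xh 0)
    (hu : ∀ t i, u t i =
      (θ t).mulVec (x t i) + (θbar t - θ t).mulVec (∑ j, α j • x t j))
    (hx : ∀ t i, x (t + 1) i =
      A.mulVec (x t i) + B.mulVec (u t i)
        + Abar.mulVec (∑ j, α j • x t j) + Bbar.mulVec (∑ j, α j • u t j) + w t i)
    (huh : ∀ t i, uh t i =
      (θ t).mulVec (xh t i) + (θbar t - θ t).mulVec (z t))
    (hxh : ∀ t i, xh (t + 1) i =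
      A.mulVec (xh t i) + B.mulVec (uh t i)
        + Abar.mulVec (∑ j, α j • xh t j) + Bbar.mulVec (∑ j, α j • uh t j) + w t i) :
    ∀ t i, x t i - ∑ j, α j • x t j = xh t i - ∑ j, α j • xh t j ∧
      u t i - ∑ j, α j • u t j = uh t i - ∑ j, α j • uh t j := by

  have havg_const : ∀ {m : ℕ} (c : Fin m → ℝ), ∑ j, α j • c = c := by
    intro m c
    rw [← Finset.sum_smul, hα, one_smul]
  have havg_mul : ∀ {p q : ℕ} (M : Matrix (Fin p) (Fin q) ℝ) (v : Fin n → Fin q → ℝ),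
      ∑ j, α j • M.mulVec (v j) = M.mulVec (∑ j, α j • v j) := by
    intro p q M v
    rw [← M.mulVecLin_apply, map_sum]
    simp [Matrix.mulVec_smul, Matrix.mulVecLin_apply]
  have hudev : ∀ t i, u t i - ∑ j, α j • u t j
      = (θ t).mulVec (x t i - ∑ j, α j • x t j) := by
    intro t i
    simp only [hu, smul_add, Finset.sum_add_distrib, havg_mul, havg_const,
      Matrix.mulVec_sub]
    abel
  have huhdev : ∀ t i, uh t i - ∑ j, α j • uh t j
      = (θ t).mulVec (xh t i - ∑ j, α j • xh t j) := by
    intro t i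
    simp only [huh, smul_add, Finset.sum_add_distrib, havg_mul, havg_const,
      Matrix.mulVec_sub]
    abel
  have key : ∀ t i, x t i - ∑ j, α j • x t j = xh t i - ∑ j, α j • xh t j := by
    intro t
    induction t with
    | zero => simp [hinit]
    | succ t ih =>
      intro i
      have lhs : x (t + 1) i - ∑ j, α j • x (t + 1) j
          = A.mulVec (x t i - ∑ j, α j • x t j)
            + B.mulVec (u t i - ∑ j, α j • u t j)
            + (w t i - ∑ j, α j • w t j) := by
        simp only [hx, smul_add, Finset.sum_add_distrib, havg_mul, havg_const,
          Matrix.mulVec_sub]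
        abel
      have rhs : xh (t + 1) i - ∑ j, α j • xh (t + 1) j
          = A.mulVec (xh t i - ∑ j, α j • xh t j)
            + B.mulVec (uh t i - ∑ j, α j • uh t j)
            + (w t i - ∑ j, α j • w t j) := by
        simp only [hxh, smul_add, Finset.sum_add_distrib, havg_mul, havg_const,
          Matrix.mulVec_sub]
        abel
      rw [lhs, rhs, hudev, huhdev, ih i]
  intro t i
  refine ⟨key t i, ?_⟩
  rw [hudev, huhdev, key t i]
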